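/- The cyclic code C = ⟨(z+1)⟩ of length 4 over R = Z₂[v]/(v³) is a (1,1)-reversible complement code: for every codeword a(z) ∈ C, the polynomial Σᵢ (1 + a_{3−i}) zⁱ also belongs to C. -/

import Mathlib

open Polynomial

noncomputable section

/-- The finite chain ring `R = Z₂[v]/(v³) = Z₂ + vZ₂ + v²Z₂`, `v³ = 0`. -/
abbrev Rv : Type := Polynomial (ZMod 2) ⧸ Ideal.span {(X : Polynomial (ZMod 2)) ^ 3}

instance : CommRing Rv := Ideal.Quotient.commRing _

/-- The element `v` of `Rv`. -/
def vv : Rv := Ideal.Quotient.mk _ X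

/-- The ambient ring `R[z]/(z⁴ − 1)` of cyclic codes of length 4 over `Rv`. -/
abbrev Q4 : Type := Polynomial Rv ⧸ Ideal.span {(X : Polynomial Rv) ^ 4 - 1}

/-- The element `z` of `Q4`. -/
def zz : Q4 := Ideal.Quotient.mk _ X

/-- The constant `r` viewed in `Q4`. -/
def cst (r : Rv) : Q4 := Ideal.Quotient.mk _ (C r)

/-- The element of `Q4` corresponding to the length-4 codeword `a`. -/
def word4 (a : Fin 4 → Rv) : Q4 := Ideal.Quotient.mk _ (∑ i : Fin 4, C (a i) * X ^ (i : ℕ))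

/-- `I` is a `(1,1)`-reversible complement cyclic code: it contains the
`(1,1)`-reverse complement `∑ᵢ (1 + a_{3−i}) zⁱ` of each codeword `∑ᵢ aᵢ zⁱ`. -/
def IsRC11 (I : Ideal Q4) : Prop :=
  ∀ a : Fin 4 → Rv, word4 a ∈ I → word4 (fun i => 1 + a (Fin.rev i)) ∈ I

lemma two_Rv : (2 : Rv) = 0 := by
  have h : ((Ideal.Quotient.mk (Ideal.span {(X : Polynomial (ZMod 2)) ^ 3}))
      (2 : Polynomial (ZMod 2))) = (2 : Rv) := map_ofNat _ 2
  rw [← h, show (2 : Polynomial (ZMod 2)) = C 2 from (map_ofNat C 2).symm,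
    show (2 : ZMod 2) = 0 from rfl]
  simp

lemma two_Q4 : (2 : Q4) = 0 := by
  have h : ((Ideal.Quotient.mk (Ideal.span {(X : Polynomial Rv) ^ 4 - 1}))
      (2 : Polynomial Rv)) = (2 : Q4) := by
    have := map_ofNat (Ideal.Quotient.mk (Ideal.span {(X : Polynomial Rv) ^ 4 - 1})) 2; exact this
  rw [← h, show (2 : Polynomial Rv) = C 2 from (map_ofNat C 2).symm, two_Rv]
  simp

lemma cst_add (r s : Rv) : cst (r + s) = cst r + cst s := by
  unfold cst; rw [C_add, map_add]

lemma word4_eq (a : Fin 4 → Rv) :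
    word4 a = cst (a 0) + cst (a 1) * zz + cst (a 2) * zz ^ 2 + cst (a 3) * zz ^ 3 := by
  unfold word4 cst zz
  rw [Fin.sum_univ_four]
  simp [map_add, map_mul, map_pow, show ((2 : Fin 4) : ℕ) = 2 from rfl,
    show ((3 : Fin 4) : ℕ) = 3 from rfl]

lemma key (a : Fin 4 → Rv) :
    word4 a - cst (a 0 + a 1 + a 2 + a 3) ∈ Ideal.span {zz + 1} := by
  rw [Ideal.mem_span_singleton']
  refine ⟨cst (a 1) + cst (a 2) * (zz + 1) + cst (a 3) * (zz ^ 2 + zz + 1), ?_⟩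
  rw [word4_eq, cst_add, cst_add, cst_add]
  linear_combination ((cst (a 1) + cst (a 2) + cst (a 3)) + (cst (a 2) + cst (a 3)) * zz
    + cst (a 3) * zz ^ 2) * two_Q4

/-- The cyclic code `C = ⟨z+1⟩` of length 4 over `Z₂[v]/(v³)` is a
`(1,1)`-reversible complement code. -/
theorem stmt7 : IsRC11 (Ideal.span {zz + 1}) := by
  intro a ha
  set I := Ideal.span {zz + 1} with hI
  have hS : cst (a 0 + a 1 + a 2 + a 3) ∈ I := by
    have h := I.sub_mem ha (key a)
    simpa using h
  have hrev0 : Fin.rev (0 : Fin 4) = 3 := by decide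
  have hrev1 : Fin.rev (1 : Fin 4) = 2 := by decide
  have hrev2 : Fin.rev (2 : Fin 4) = 1 := by decide
  have hrev3 : Fin.rev (3 : Fin 4) = 0 := by decide
  have hsum : (1 + a (Fin.rev 0)) + (1 + a (Fin.rev 1)) + (1 + a (Fin.rev 2))
      + (1 + a (Fin.rev 3)) = a 0 + a 1 + a 2 + a 3 := by
    rw [hrev0, hrev1, hrev2, hrev3]
    linear_combination 2 * two_Rv
  have hb : word4 (fun i => 1 + a (Fin.rev i)) - cst (a 0 + a 1 + a 2 + a 3) ∈ I := by
    have h := key (fun i => 1 + a (Fin.rev i))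
    simpa only [hsum] using h
  have h := I.add_mem hb hS
  simpa using h
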